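/- Let k ≥ 1 and let a_1, …, a_k be nonnegative reals satisfying 2a_1 - a_2 ≥ 0, 2a_i - a_{i-1} - a_{i+1} ≥ 0 for 2 ≤ i ≤ k-1, and 2a_k - a_{k-1} ≥ 0. Then a_1 + a_k ≤ (k+1)·min(a_1, …, a_k). -/
import Mathlib


theorem stmt1 (k : ℕ) (hk : 1 ≤ k) (a : ℕ → ℝ)
    (hnn : ∀ i, 1 ≤ i → i ≤ k → 0 ≤ a i)
    (h1 : 2 * a 1 - a 2 ≥ 0)
    (hmid : ∀ i, 2 ≤ i → i ≤ k - 1 → 2 * a i - a (i - 1) - a (i + 1) ≥ 0)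
    (hk' : 2 * a k - a (k - 1) ≥ 0)
    (hne : (Finset.Icc 1 k).Nonempty) :
    a 1 + a k ≤ (k + 1 : ℝ) * (Finset.Icc 1 k).inf' hne a := by
  classical
  set b : ℕ → ℝ := fun i => if 1 ≤ i ∧ i ≤ k then a i else 0 with hbdef
  have hb : ∀ i, 1 ≤ i → i ≤ k → b i = a i := by
    intro i h1i h2i; simp [hbdef, h1i, h2i]
  have hb0 : b 0 = 0 := by simp [hbdef]
  have hbk1 : b (k + 1) = 0 := by simp [hbdef]
  set e : ℕ → ℝ := fun i => b (i + 1) - b i with hedef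
  have hstep : ∀ j, j + 1 ≤ k → e (j + 1) ≤ e j := by
    intro j hj
    have key : b j + b (j + 2) ≤ 2 * b (j + 1) := by
      rcases Nat.eq_zero_or_pos j with rfl | hjpos
      · rw [hb0, hb 1 le_rfl hj]
        rcases eq_or_lt_of_le hj with hke | hk2
        · have : b 2 = 0 := by simp [hbdef, ← hke]
          rw [this]
          have := hnn 1 le_rfl hj
          linarith
        · rw [hb 2 (by norm_num) hk2]
          linarith
      · rcases eq_or_lt_of_le hj with hke | hk2
        · -- j + 1 = k
          have hbj2 : b (j + 2) = 0 := by
            have : j + 2 = k + 1 := by omega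
            rw [this, hbk1]
          rw [hbj2, hb (j + 1) (by omega) hj, hb j hjpos (by omega)]
          have hjk : j = k - 1 := by omega
          have hjk1 : j + 1 = k := hke
          rw [hjk1]
          have : a (k - 1) = a j := by rw [hjk]
          linarith [hk', this.symm ▸ hk']
        · -- 2 ≤ j + 1 ≤ k - 1
          have hm := hmid (j + 1) (by omega) (by omega)
          have h1' : (j + 1 : ℕ) - 1 = j := by omega
          rw [h1'] at hm
          rw [hb j hjpos (by omega), hb (j + 1) (by omega) hj,
            hb (j + 2) (by omega) (by omega)]
          linarith
    simp only [hedef]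
    have : b (j + 1 + 1) = b (j + 2) := by norm_num
    rw [this]
    linarith
  have hmono : ∀ j, j ≤ k → ∀ i, i ≤ j → e j ≤ e i := by
    intro j
    induction j with
    | zero =>
      intro _ i hi
      have : i = 0 := Nat.le_zero.mp hi
      rw [this]
    | succ j ih =>
      intro hj i hi
      rcases Nat.lt_or_ge i (j + 1) with h | h
      · exact le_trans (hstep j hj) (ih (Nat.le_of_succ_le hj) i (Nat.lt_succ_iff.mp h))
      · have : i = j + 1 := le_antisymm hi h
        rw [this]
  have hsum : ∀ n, ∑ i ∈ Finset.range n, e i = b n := by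
    intro n
    have := Finset.sum_range_sub b n
    simp only [hedef]
    rw [this, hb0, sub_zero]
  have he0 : e 0 = a 1 := by simp only [hedef]; rw [hb 1 le_rfl hk, hb0, sub_zero]
  have hek : e k = -a k := by
    simp only [hedef]; rw [hbk1, hb k hk le_rfl]; ring
  -- a k ≤ k * a 1
  have h_akle : a k ≤ (k : ℝ) * a 1 := by
    have hub : ∀ i ∈ Finset.range k, e i ≤ e 0 := by
      intro i hi
      exact hmono i (le_of_lt (Finset.mem_range.mp hi)) 0 (Nat.zero_le i)
    have := Finset.sum_le_card_nsmul (Finset.range k) e (e 0) hub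
    rw [hsum k, Finset.card_range, nsmul_eq_mul, he0, hb k hk le_rfl] at this
    exact this
  -- a 1 ≤ k * a k
  have h_a1le : a 1 ≤ (k : ℝ) * a k := by
    have hsumI : ∑ i ∈ Finset.Ico 1 (k + 1), e i = -a 1 := by
      rw [Finset.sum_Ico_eq_sub _ (by omega), hsum, hsum, hbk1, hb 1 le_rfl hk]
      ring
    have hlb : ∀ i ∈ Finset.Ico 1 (k + 1), e k ≤ e i := by
      intro i hi
      have := Finset.mem_Ico.mp hi
      exact hmono k le_rfl i (by omega)
    have := Finset.card_nsmul_le_sum (Finset.Ico 1 (k + 1)) e (e k) hlb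
    rw [hsumI, Nat.card_Ico, nsmul_eq_mul, hek] at this
    have hk1 : (k + 1 - 1 : ℕ) = k := by omega
    rw [hk1] at this
    nlinarith
  -- lower bound for every a m
  have h_low : ∀ m ∈ Finset.Icc 1 k, min (a 1) (a k) ≤ a m := by
    intro m hm
    obtain ⟨hm1, hm2⟩ := Finset.mem_Icc.mp hm
    by_cases hcase : 0 ≤ e (m - 1)
    · have hsum1 : ∑ i ∈ Finset.Ico 1 m, e i = b m - b 1 := by
        rw [Finset.sum_Ico_eq_sub _ hm1, hsum, hsum]
      have hpos : ∀ i ∈ Finset.Ico 1 m, (0 : ℝ) ≤ e i := by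
        intro i hi
        have hi' := Finset.mem_Ico.mp hi
        have := hmono (m - 1) (by omega) i (by omega)
        linarith
      have := Finset.sum_nonneg hpos
      rw [hsum1, hb m hm1 hm2, hb 1 le_rfl hk] at this
      calc min (a 1) (a k) ≤ a 1 := min_le_left _ _
        _ ≤ a m := by linarith
    · push_neg at hcase
      have hsum2 : ∑ i ∈ Finset.Ico m k, e i = b k - b m := by
        rw [Finset.sum_Ico_eq_sub _ hm2, hsum, hsum]
      have hneg : ∀ i ∈ Finset.Ico m k, e i ≤ 0 := by
        intro i hi
        have hi' := Finset.mem_Ico.mp hi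
        have := hmono i (by omega) (m - 1) (by omega)
        linarith
      have := Finset.sum_nonpos hneg
      rw [hsum2, hb m hm1 hm2, hb k hk le_rfl] at this
      calc min (a 1) (a k) ≤ a k := min_le_right _ _
        _ ≤ a m := by linarith
  have hinf : min (a 1) (a k) ≤ (Finset.Icc 1 k).inf' hne a :=
    Finset.le_inf' hne a h_low
  have hmin : a 1 + a k ≤ ((k : ℝ) + 1) * min (a 1) (a k) := by
    rcases min_cases (a 1) (a k) with ⟨hmeq, hle⟩ | ⟨hmeq, hle⟩
    · rw [hmeq]; nlinarith
    · rw [hmeq]; nlinarith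
  have hkpos : (0 : ℝ) < (k : ℝ) + 1 := by positivity
  calc a 1 + a k ≤ ((k : ℝ) + 1) * min (a 1) (a k) := hmin
    _ ≤ ((k : ℝ) + 1) * (Finset.Icc 1 k).inf' hne a := by
        exact mul_le_mul_of_nonneg_left hinf (le_of_lt hkpos)
    _ = ((k : ℝ) + 1) * (Finset.Icc 1 k).inf' hne a := rfl
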